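/- Let R be a unital commutative ring, n ≥ 2, and I an ideal of R. The kernel of the homomorphism St_{n+1}(R) → St_{n+1}(R/I) induced by the quotient map R → R/I (sending x_{i,j}(r) to x_{i,j}(r + I)) equals the normal closure in St_{n+1}(R) of the set {x_{i,j}(s) : 1 ≤ i,j ≤ n+1, i ≠ j, s ∈ I}. -/

import Mathlib

noncomputable section

open scoped commutatorElement

/-- Index set of the Steinberg generators: pairs `(i,j)` with `i ≠ j`. -/
abbrev Idx (n : ℕ) := {ij : Fin (n + 1) × Fin (n + 1) // ij.1 ≠ ij.2}

/-- The generators `x_{i,j}(r)` of the Steinberg group `St_{n+1}(R)`. -/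
abbrev StGen (R : Type*) (n : ℕ) := Idx n × R

/-- The defining (Steinberg) relators of `St_{n+1}(R)`. -/
def stRels (R : Type*) [CommRing R] (n : ℕ) : Set (FreeGroup (StGen R n)) :=
  { w | -- x_{i,j}(0) = e
    (∃ ij : Idx n, w = FreeGroup.of ((ij, (0 : R)) : StGen R n)) ∨
    -- x_{i,j}(r₁) · x_{i,j}(r₂) = x_{i,j}(r₁ + r₂)
    (∃ (ij : Idx n) (r1 r2 : R),
      w = FreeGroup.of ((ij, r1) : StGen R n) * FreeGroup.of ((ij, r2) : StGen R n) *
        (FreeGroup.of ((ij, r1 + r2) : StGen R n))⁻¹) ∨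
    -- [x_{i,j}(r₁), x_{i',j'}(r₂)] = e  when  (i,j) ≠ (i',j'), j ≠ i' and j' ≠ i
    (∃ (ij ij' : Idx n) (r1 r2 : R), ij ≠ ij' ∧ ij.1.2 ≠ ij'.1.1 ∧ ij'.1.2 ≠ ij.1.1 ∧
      w = ⁅FreeGroup.of ((ij, r1) : StGen R n), FreeGroup.of ((ij', r2) : StGen R n)⁆) ∨
    -- [x_{i,j}(r₁), x_{j,k}(r₂)] = x_{i,k}(r₁r₂)  for pairwise distinct i, j, k
    (∃ (i j k : Fin (n + 1)) (hij : i ≠ j) (hjk : j ≠ k) (hik : i ≠ k) (r1 r2 : R),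
      w = ⁅FreeGroup.of ((⟨(i, j), hij⟩, r1) : StGen R n),
            FreeGroup.of ((⟨(j, k), hjk⟩, r2) : StGen R n)⁆ *
          (FreeGroup.of ((⟨(i, k), hik⟩, r1 * r2) : StGen R n))⁻¹) }

/-- The Steinberg group `St_{n+1}(R)`. -/
abbrev St (R : Type*) [CommRing R] (n : ℕ) := PresentedGroup (stRels R n)

/-- The generator `x_{i,j}(r)` of `St_{n+1}(R)`. -/
def stOf {R : Type*} [CommRing R] {n : ℕ} (ij : Idx n) (r : R) : St R n :=
  PresentedGroup.of (ij, r)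

section Aux

variable {R : Type*} [CommRing R] {n : ℕ}

lemma st_rel_one {w : FreeGroup (StGen R n)} (h : w ∈ stRels R n) :
    PresentedGroup.mk (stRels R n) w = 1 := by
  have : w ∈ Subgroup.normalClosure (stRels R n) := Subgroup.subset_normalClosure h
  exact (QuotientGroup.eq_one_iff w).mpr this

lemma st_mk_of (ij : Idx n) (r : R) :
    PresentedGroup.mk (stRels R n) (FreeGroup.of ((ij, r) : StGen R n)) = stOf ij r := rfl

lemma stOf_zero (ij : Idx n) : stOf (R := R) ij 0 = 1 :=
  st_rel_one (Or.inl ⟨ij, rfl⟩)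

lemma stOf_add (ij : Idx n) (r1 r2 : R) :
    stOf ij r1 * stOf ij r2 = stOf ij (r1 + r2) := by
  have h := st_rel_one (Or.inr (Or.inl ⟨ij, r1, r2, rfl⟩))
  rw [map_mul, map_mul, map_inv] at h
  rw [st_mk_of, st_mk_of, st_mk_of] at h
  exact eq_of_mul_inv_eq_one h

lemma stOf_comm_triv {ij ij' : Idx n} (h1 : ij ≠ ij') (h2 : ij.1.2 ≠ ij'.1.1)
    (h3 : ij'.1.2 ≠ ij.1.1) (r1 r2 : R) :
    ⁅stOf ij r1, stOf ij' r2⁆ = 1 := by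
  have h := st_rel_one (Or.inr (Or.inr (Or.inl ⟨ij, ij', r1, r2, h1, h2, h3, rfl⟩)))
  rw [map_commutatorElement, st_mk_of, st_mk_of] at h
  exact h

lemma stOf_comm {i j k : Fin (n + 1)} (hij : i ≠ j) (hjk : j ≠ k) (hik : i ≠ k) (r1 r2 : R) :
    ⁅stOf (⟨(i, j), hij⟩ : Idx n) r1, stOf (⟨(j, k), hjk⟩ : Idx n) r2⁆ =
      stOf (⟨(i, k), hik⟩ : Idx n) (r1 * r2) := by
  have h := st_rel_one (Or.inr (Or.inr (Or.inr ⟨i, j, k, hij, hjk, hik, r1, r2, rfl⟩)))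
  rw [map_mul, map_inv, map_commutatorElement, st_mk_of, st_mk_of, st_mk_of] at h
  exact eq_of_mul_inv_eq_one h

lemma stOf_sub (ij : Idx n) (r r' : R) :
    stOf ij r = stOf ij r' * stOf ij (r - r') := by
  rw [stOf_add]
  ring_nf

end Aux

theorem ker_steinberg_quotient_eq_normalClosure (R : Type*) [CommRing R] (n : ℕ)
    (hn : 2 ≤ n) (I : Ideal R)
    (f : St R n →* St (R ⧸ I) n)
    (hf : ∀ (ij : Idx n) (r : R), f (stOf ij r) = stOf ij (Ideal.Quotient.mk I r)) :
    f.ker =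
      Subgroup.normalClosure { g : St R n | ∃ (ij : Idx n), ∃ s ∈ I, g = stOf ij s } := by
  set S : Set (St R n) := { g : St R n | ∃ (ij : Idx n), ∃ s ∈ I, g = stOf ij s } with hS
  set N : Subgroup (St R n) := Subgroup.normalClosure S with hN
  have hNnormal : N.Normal := Subgroup.normalClosure_normal
  set π : St R n →* St R n ⧸ N := QuotientGroup.mk' N with hπ
  -- π kills generators with entries in I
  have hπS : ∀ (ij : Idx n) (s : R), s ∈ I → π (stOf ij s) = 1 := by
    intro ij s hs
    rw [hπ, QuotientGroup.mk'_apply, QuotientGroup.eq_one_iff]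
    exact Subgroup.subset_normalClosure ⟨ij, s, hs, rfl⟩
  -- π identifies generators whose entries are congruent mod I
  have hπcongr : ∀ (ij : Idx n) (r r' : R), r - r' ∈ I → π (stOf ij r) = π (stOf ij r') := by
    intro ij r r' h
    rw [stOf_sub ij r r', map_mul, hπS ij _ h, mul_one]
  -- a section of the quotient map
  obtain ⟨σ, hσ⟩ : ∃ σ : R ⧸ I → R, ∀ q, Ideal.Quotient.mk I (σ q) = q := by
    refine ⟨Function.surjInv Ideal.Quotient.mk_surjective, fun q => ?_⟩
    exact Function.surjInv_eq Ideal.Quotient.mk_surjective q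
  have hmem : ∀ (a : R) (q : R ⧸ I), Ideal.Quotient.mk I a = q → a - σ q ∈ I := by
    intro a q h
    rw [← Ideal.Quotient.eq_zero_iff_mem, map_sub, h, hσ, sub_self]
  -- the candidate map on generators
  set F : StGen (R ⧸ I) n → St R n ⧸ N := fun p => π (stOf p.1 (σ p.2)) with hF
  have hrels : ∀ w ∈ stRels (R ⧸ I) n, FreeGroup.lift F w = 1 := by
    intro w hw
    rcases hw with ⟨ij, rfl⟩ | ⟨ij, q1, q2, rfl⟩ |
      ⟨ij, ij', q1, q2, h1, h2, h3, rfl⟩ | ⟨i, j, k, hij, hjk, hik, q1, q2, rfl⟩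
    · rw [FreeGroup.lift_apply_of, hF]
      have := hπcongr ij (σ 0) 0 (by simpa using Ideal.Quotient.eq_zero_iff_mem.mp (hσ 0))
      simp only at this ⊢
      rw [this, stOf_zero, map_one]
    · rw [map_mul, map_mul, map_inv, FreeGroup.lift_apply_of, FreeGroup.lift_apply_of, FreeGroup.lift_apply_of, hF]
      simp only
      rw [← map_mul, stOf_add]
      have : π (stOf ij (σ q1 + σ q2)) = π (stOf ij (σ (q1 + q2))) := by
        apply hπcongr
        apply hmem
        rw [map_add, hσ, hσ]
      rw [this, mul_inv_cancel]
    · rw [map_commutatorElement, FreeGroup.lift_apply_of, FreeGroup.lift_apply_of, hF]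
      simp only
      rw [← map_commutatorElement, stOf_comm_triv h1 h2 h3, map_one]
    · rw [map_mul, map_inv, map_commutatorElement, FreeGroup.lift_apply_of, FreeGroup.lift_apply_of,
        FreeGroup.lift_apply_of, hF]
      simp only
      rw [← map_commutatorElement, stOf_comm hij hjk hik]
      have : π (stOf (⟨(i, k), hik⟩ : Idx n) (σ q1 * σ q2)) =
          π (stOf (⟨(i, k), hik⟩ : Idx n) (σ (q1 * q2))) := by
        apply hπcongr
        apply hmem
        rw [map_mul, hσ, hσ]
      rw [this, mul_inv_cancel]
  set g : St (R ⧸ I) n →* St R n ⧸ N := PresentedGroup.toGroup hrels with hg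
  have hgf : g.comp f = π := by
    apply PresentedGroup.ext
    intro x
    obtain ⟨ij, r⟩ := x
    have h1 : f (PresentedGroup.of (x := ((ij, r) : StGen R n))) =
        stOf ij (Ideal.Quotient.mk I r) := hf ij r
    rw [MonoidHom.comp_apply, h1]
    have h2 : g (stOf ij (Ideal.Quotient.mk I r)) = F (ij, Ideal.Quotient.mk I r) :=
      PresentedGroup.toGroup.of hrels
    rw [h2, hF]
    simp only
    exact hπcongr ij (σ (Ideal.Quotient.mk I r)) r
      (by simpa using (I.neg_mem (hmem r _ rfl)))
  apply le_antisymm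
  · intro x hx
    have : π x = 1 := by
      rw [← hgf]
      simp only [MonoidHom.comp_apply]
      rw [MonoidHom.mem_ker.mp hx, map_one]
    rwa [hπ, QuotientGroup.mk'_apply, QuotientGroup.eq_one_iff] at this
  · apply Subgroup.normalClosure_le_normal
    rintro x ⟨ij, s, hs, rfl⟩
    rw [SetLike.mem_coe, MonoidHom.mem_ker, hf]
    rw [Ideal.Quotient.eq_zero_iff_mem.mpr hs, stOf_zero]
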